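/- For every real r ≥ 1, h(r) < 0; consequently every r > 0 with h(r) = 0 satisfies r < 1. -/

import Mathlib

open MeasureTheory Real Filter

/-- `u r z = √(z(1−rz)/(z+r))`, the real branch of `|w_r|` on `(0, 1/r)`. -/
noncomputable def u (r z : ℝ) : ℝ := Real.sqrt (z * (1 - r * z) / (z + r))

/-- The period function `h` of the candidate maximal Klein bottles. -/
noncomputable def h (r : ℝ) : ℝ :=
  ∫ z in (0:ℝ)..(1/r),
    -2 * u r z * (-1 + z + r * (2 - 3 * z + r * (-4 + 4 * r + 3 * z))) / (r + z)

/-- `A₁ r = ∫₀^{1/r} u_r(z) dz`. -/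
noncomputable def A₁ (r : ℝ) : ℝ := ∫ z in (0:ℝ)..(1/r), u r z

/-- `A₂ r = ∫₀^{1/r} u_r(z)/(z+r) dz`. -/
noncomputable def A₂ (r : ℝ) : ℝ := ∫ z in (0:ℝ)..(1/r), u r z / (z + r)

lemma key_neg (r : ℝ) (hr : 1 ≤ r) : h r < 0 := by
  have hr0 : (0:ℝ) < r := lt_of_lt_of_le one_pos hr
  have hinv : (0:ℝ) < 1 / r := by positivity
  set f : ℝ → ℝ := fun z =>
    -2 * u r z * (-1 + z + r * (2 - 3 * z + r * (-4 + 4 * r + 3 * z))) / (r + z) with hf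
  have hcont : ContinuousOn f (Set.uIcc (0:ℝ) (1/r)) := by
    have huicc : Set.uIcc (0:ℝ) (1/r) = Set.Icc 0 (1/r) :=
      Set.uIcc_of_le hinv.le
    rw [huicc]
    have hcu : ContinuousOn (fun z => u r z) (Set.Icc (0:ℝ) (1/r)) := by
      apply Real.continuous_sqrt.comp_continuousOn
      apply ContinuousOn.div (by fun_prop) (by fun_prop)
      intro z hz
      have : (0:ℝ) < z + r := by
        have := hz.1; nlinarith
      exact ne_of_gt this
    apply ContinuousOn.div
    · exact (continuousOn_const.mul hcu).mul (by fun_prop)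
    · fun_prop
    · intro z hz
      have : (0:ℝ) < r + z := by
        have := hz.1; nlinarith
      exact ne_of_gt this
  have hint : IntervalIntegrable f volume 0 (1/r) :=
    hcont.intervalIntegrable
  have hpos : ∀ z ∈ Set.Ioo (0:ℝ) (1/r), 0 < -f z := by
    intro z hz
    have hz0 : 0 < z := hz.1
    have hz1 : r * z < 1 := by
      have := hz.2
      calc r * z < r * (1/r) := by
            exact (mul_lt_mul_iff_right₀ hr0).mpr hz.2
        _ = 1 := by field_simp
    have hzr : 0 < z + r := by linarith
    have hu : 0 < u r z := by
      apply Real.sqrt_pos.mpr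
      apply div_pos _ hzr
      nlinarith
    have hP : 0 < -1 + z + r * (2 - 3 * z + r * (-4 + 4 * r + 3 * z)) := by
      nlinarith [mul_nonneg (mul_nonneg hr0.le hr0.le) (sub_nonneg.mpr hr),
        mul_nonneg hz0.le (mul_nonneg hr0.le (sub_nonneg.mpr hr))]
    have hrz : 0 < r + z := by linarith
    have : f z < 0 := by
      apply div_neg_of_neg_of_pos _ hrz
      nlinarith
    linarith
  have h0 : 0 < ∫ z in (0:ℝ)..(1/r), -f z := by
    apply intervalIntegral.intervalIntegral_pos_of_pos_on hint.neg hpos hinv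
  have : h r = ∫ z in (0:ℝ)..(1/r), f z := rfl
  rw [this]
  have hneg : (∫ z in (0:ℝ)..(1/r), -f z) = -∫ z in (0:ℝ)..(1/r), f z :=
    intervalIntegral.integral_neg
  linarith [hneg ▸ h0]

theorem stmt_7 :
    (∀ r : ℝ, 1 ≤ r → h r < 0) ∧ (∀ r : ℝ, 0 < r → h r = 0 → r < 1) := by
  refine ⟨fun r hr => key_neg r hr, fun r hr0 hh => ?_⟩
  by_contra hle
  push_neg at hle
  exact absurd hh (ne_of_lt (key_neg r hle))
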